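/- Telescoping perturbation bound: let d, d' ∈ ℝ^{k×k} be nonnegative distance bound vectors with |dᵢⱼ − d'ᵢⱼ| ≤ ε and d'ᵢⱼ ≤ dᵢⱼ for all pairs, and let r ∈ ℝ^k with 0 ≤ rᵢ ≤ 1. Then OPT(r, d) − OPT(r, d') ≤ ε k³, where OPT(r,c) is the optimal value of LP(r,c). -/

import Mathlib

namespace Stmt8Aux

variable {k : ℕ}

/-- Cost of a walk (list of vertices) with edge weights `w`. -/
def cost (w : Fin k → Fin k → ℝ) : List (Fin k) → ℝ
  | [] => 0
  | [_] => 0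
  | a :: b :: t => w a b + cost w (b :: t)

lemma cost_nonneg (w : Fin k → Fin k → ℝ) (hw : ∀ a b, 0 ≤ w a b) :
    ∀ l, 0 ≤ cost w l
  | [] => le_refl _
  | [_] => le_refl _
  | a :: b :: t => by
    have := cost_nonneg w hw (b :: t)
    simp only [cost]; have := hw a b; linarith

lemma cost_append (w : Fin k → Fin k → ℝ) (x : Fin k) :
    ∀ A B, cost w (A ++ x :: B) = cost w (A ++ [x]) + cost w (x :: B)
  | [], B => by simp [cost]
  | [a], B => by simp [cost]
  | a :: a' :: A, B => by
    have := cost_append w x (a' :: A) B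
    simp only [List.cons_append, List.append_eq, cost] at *
    linarith

lemma cost_concat (w : Fin k → Fin k → ℝ) (i : Fin k) :
    ∀ (l : List (Fin k)) (h : l ≠ []), cost w (l ++ [i]) = cost w l + w (l.getLast h) i
  | [], h => absurd rfl h
  | [a], _ => by simp [cost]
  | a :: b :: t, _ => by
    have := cost_concat w i (b :: t) (by simp)
    simp only [List.cons_append, List.append_eq, cost,
      List.getLast_cons (by simp : b :: t ≠ [])] at *
    rw [this]; ring

lemma head_append_cons (A : List (Fin k)) (x : Fin k) (B B' : List (Fin k)) :
    (A ++ x :: B).head (by simp) = (A ++ x :: B').head (by simp) := by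
  cases A <;> simp

lemma telescope (w : Fin k → Fin k → ℝ) (p : Fin k → ℝ) (ε : ℝ)
    (hstep : ∀ a b, p b - p a - ε ≤ w a b) :
    ∀ (l : List (Fin k)) (a : Fin k),
      p ((a :: l).getLast (by simp)) - l.length * ε ≤ p a + cost w (a :: l)
  | [], a => by simp [cost]
  | b :: t, a => by
    have ih := telescope w p ε hstep t b
    have h1 := hstep a b
    simp only [cost, List.getLast_cons (by simp : b :: t ≠ []),
      List.length_cons] at *
    push_cast
    linarith

end Stmt8Aux

namespace Stmt8Aux2

lemma exists_dup {α : Type*} : ∀ (l : List α), ¬ l.Nodup →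
    ∃ x l₁ l₂ l₃, l = l₁ ++ x :: (l₂ ++ x :: l₃)
  | [], h => absurd List.nodup_nil h
  | a :: t, h => by
    by_cases ha : a ∈ t
    · obtain ⟨s, u, rfl⟩ := List.append_of_mem ha
      exact ⟨a, [], s, u, by simp⟩
    · have ht : ¬ t.Nodup := fun hn => h (List.nodup_cons.mpr ⟨ha, hn⟩)
      obtain ⟨x, l₁, l₂, l₃, rfl⟩ := exists_dup t ht
      exact ⟨x, a :: l₁, l₂, l₃, by simp⟩

end Stmt8Aux2

namespace Stmt8Aux

lemma walkBound_aux (w : Fin k → Fin k → ℝ) (p : Fin k → ℝ) (ε : ℝ)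
    (hw0 : ∀ a b, 0 ≤ w a b) (hstep : ∀ a b, p b - p a - ε ≤ w a b) (hε : 0 ≤ ε) :
    ∀ (n : ℕ) (l : List (Fin k)), l.length ≤ n → ∀ (hne : l ≠ []),
      p (l.getLast hne) - k * ε ≤ p (l.head hne) + cost w l := by
  intro n
  induction n with
  | zero => intro l hl hne; simp at hl; exact absurd hl hne
  | succ n ih =>
    intro l hl hne
    by_cases hlen : l.length ≤ k + 1
    · obtain ⟨a, t, rfl⟩ := List.exists_cons_of_ne_nil hne
      have htel := telescope w p ε hstep t a
      have hlt : (t.length : ℝ) ≤ (k : ℝ) := by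
        have : t.length ≤ k := by simpa using hlen
        exact_mod_cast this
      have : (t.length : ℝ) * ε ≤ k * ε := mul_le_mul_of_nonneg_right hlt hε
      simp only [List.head_cons]
      have hgl : (a :: t).getLast hne = (a :: t).getLast (by simp) := rfl
      rw [hgl]
      linarith
    · have hnd : ¬ l.Nodup := by
        intro hnod
        exact hlen (le_trans hnod.length_le_card (by simp))
      obtain ⟨x, l₁, l₂, l₃, rfl⟩ := Stmt8Aux2.exists_dup l hnd
      set l' : List (Fin k) := l₁ ++ x :: l₃ with hl'
      have hne' : l' ≠ [] := by simp [hl']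
      have hlen' : l'.length ≤ n := by
        have h1 : l'.length < (l₁ ++ x :: (l₂ ++ x :: l₃)).length := by
          simp [hl']
        omega
      have hrec := ih l' hlen' hne'
      -- heads agree
      have hhead : (l₁ ++ x :: (l₂ ++ x :: l₃)).head hne = l'.head hne' :=
        head_append_cons l₁ x (l₂ ++ x :: l₃) l₃
      -- getLasts agree
      have hlast : (l₁ ++ x :: (l₂ ++ x :: l₃)).getLast hne = l'.getLast hne' := by
        calc (l₁ ++ x :: (l₂ ++ x :: l₃)).getLast hne
            = ((l₁ ++ x :: l₂) ++ (x :: l₃)).getLast (by simp) :=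
              List.getLast_congr _ _ (by simp)
          _ = (x :: l₃).getLast (by simp) := List.getLast_append_of_right_ne_nil _ _ (by simp)
          _ = (l₁ ++ (x :: l₃)).getLast (by simp) :=
              (List.getLast_append_of_right_ne_nil l₁ (x :: l₃) (by simp)).symm
          _ = l'.getLast hne' := rfl
      -- costs
      have hcost : cost w l' ≤ cost w (l₁ ++ x :: (l₂ ++ x :: l₃)) := by
        rw [cost_append w x l₁ (l₂ ++ x :: l₃), hl', cost_append w x l₁ l₃]
        have e2 : x :: (l₂ ++ x :: l₃) = (x :: l₂) ++ x :: l₃ := by simp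
        rw [e2, cost_append w x (x :: l₂) l₃]
        have := cost_nonneg w hw0 ((x :: l₂) ++ [x])
        linarith
      rw [hhead, hlast]
      linarith

lemma walkBound (w : Fin k → Fin k → ℝ) (p : Fin k → ℝ) (ε : ℝ)
    (hw0 : ∀ a b, 0 ≤ w a b) (hstep : ∀ a b, p b - p a - ε ≤ w a b) (hε : 0 ≤ ε)
    (l : List (Fin k)) (hne : l ≠ []) :
    p (l.getLast hne) - k * ε ≤ p (l.head hne) + cost w l :=
  walkBound_aux w p ε hw0 hstep hε l.length l le_rfl hne

end Stmt8Aux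

namespace Stmt8BF

variable {k : ℕ}

noncomputable def g (w : Fin k → Fin k → ℝ) (p : Fin k → ℝ) (hk : 0 < k) :
    ℕ → Fin k → ℝ
  | 0 => p
  | n + 1 => fun i =>
      min (g w p hk n i)
        (Finset.univ.inf' ⟨⟨0, hk⟩, Finset.mem_univ _⟩
          (fun j => g w p hk n j + w j i))

variable (w : Fin k → Fin k → ℝ) (p : Fin k → ℝ) (hk : 0 < k)

lemma g_anti (n : ℕ) (i : Fin k) : g w p hk (n + 1) i ≤ g w p hk n i :=
  min_le_left _ _

lemma g_step (n : ℕ) (i j : Fin k) : g w p hk (n + 1) i ≤ g w p hk n j + w j i :=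
  le_trans (min_le_right _ _) (Finset.inf'_le _ (Finset.mem_univ j))

lemma g_nonneg (hw0 : ∀ a b, 0 ≤ w a b) (hp0 : ∀ i, 0 ≤ p i) :
    ∀ n i, 0 ≤ g w p hk n i := by
  intro n
  induction n with
  | zero => exact hp0
  | succ n ih =>
    intro i
    refine le_min (ih i) (Finset.le_inf' _ _ fun j _ => ?_)
    have := ih j; have := hw0 j i; linarith

end Stmt8BF

namespace Stmt8BF
variable {k : ℕ} (w : Fin k → Fin k → ℝ) (p : Fin k → ℝ)

lemma g_walk (hk : 0 < k) (n : ℕ) (i : Fin k) :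
    ∃ (l : List (Fin k)) (hne : l ≠ []),
      l.getLast hne = i ∧ p (l.head hne) + Stmt8Aux.cost w l ≤ g w p hk n i := by
  induction n generalizing i with
  | zero => exact ⟨[i], by simp, by simp, by simp [Stmt8Aux.cost, g]⟩
  | succ n ih =>
    obtain ⟨j, -, hj⟩ := Finset.exists_mem_eq_inf'
      (⟨⟨0, hk⟩, Finset.mem_univ _⟩ : (Finset.univ : Finset (Fin k)).Nonempty)
      (fun j => g w p hk n j + w j i)
    rcases le_total (g w p hk n i)
        (Finset.univ.inf' ⟨⟨0, hk⟩, Finset.mem_univ _⟩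
          (fun j => g w p hk n j + w j i)) with hcase | hcase
    · obtain ⟨l, hne, hlast, hcost⟩ := ih i
      refine ⟨l, hne, hlast, ?_⟩
      have : g w p hk (n + 1) i = g w p hk n i := min_eq_left hcase
      rw [this]; exact hcost
    · obtain ⟨l, hne, hlast, hcost⟩ := ih j
      have hne2 : l ++ [i] ≠ [] := by simp
      refine ⟨l ++ [i], hne2, ?_, ?_⟩
      · exact List.getLast_append_of_right_ne_nil l [i] (by simp)
      · have hh : (l ++ [i]).head hne2 = l.head hne := List.head_append_of_ne_nil hne
        have hc : Stmt8Aux.cost w (l ++ [i]) = Stmt8Aux.cost w l + w j i := by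
          rw [Stmt8Aux.cost_concat w i l hne, hlast]
        have hmin : g w p hk (n + 1) i = g w p hk n j + w j i := by
          have : g w p hk (n + 1) i
              = Finset.univ.inf' ⟨⟨0, hk⟩, Finset.mem_univ _⟩
                (fun j => g w p hk n j + w j i) := min_eq_right hcase
          rw [this, hj]
        rw [hh, hc, hmin]
        linarith

lemma key (hk : 0 < k) (ε : ℝ) (hw0 : ∀ a b, 0 ≤ w a b)
    (hstep : ∀ a b, p b - p a - ε ≤ w a b) (hε : 0 ≤ ε) (hp0 : ∀ i, 0 ≤ p i) :
    ∃ p' : Fin k → ℝ, (∀ i, 0 ≤ p' i) ∧ (∀ i, p' i ≤ p i) ∧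
      (∀ i, p i - k * ε ≤ p' i) ∧ (∀ i j, p' i ≤ p' j + w j i) := by
  have g_lb : ∀ n i, p i - k * ε ≤ g w p hk n i := by
    intro n i
    obtain ⟨l, hne, hlast, hcost⟩ := g_walk w p hk n i
    have := Stmt8Aux.walkBound w p ε hw0 hstep hε l hne
    rw [hlast] at this
    linarith
  set p' : Fin k → ℝ := fun i => ⨅ n, g w p hk n i with hp'
  have bdd : ∀ i, BddBelow (Set.range fun n => g w p hk n i) := by
    intro i
    exact ⟨0, by rintro _ ⟨n, rfl⟩; exact g_nonneg w p hk hw0 hp0 n i⟩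
  refine ⟨p', fun i => le_ciInf fun n => g_nonneg w p hk hw0 hp0 n i,
    fun i => ciInf_le (bdd i) 0,
    fun i => le_ciInf fun n => g_lb n i,
    fun i j => ?_⟩
  have h1 : ∀ n, p' i - w j i ≤ g w p hk n j := by
    intro n
    have h2 : p' i ≤ g w p hk (n + 1) i := ciInf_le (bdd i) (n + 1)
    have h3 := g_step w p hk n i j
    linarith
  have := le_ciInf h1
  simp only [hp'] at *
  linarith

end Stmt8BF

/-- Feasible region of LP(r,c): p ≥ 0, ∑ p ≤ 1, |pᵢ − pⱼ| ≤ cᵢⱼ. -/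
def Feasible {k : ℕ} (c : Fin k → Fin k → ℝ) (p : Fin k → ℝ) : Prop :=
  (∀ i, 0 ≤ p i) ∧ (∑ i, p i ≤ 1) ∧ ∀ i j, |p i - p j| ≤ c i j

/-- The LP objective ⟨r,p⟩. -/
def obj {k : ℕ} (r p : Fin k → ℝ) : ℝ := ∑ i, r i * p i

/-- Optimal value of LP(r,c). -/
noncomputable def OPT {k : ℕ} (r : Fin k → ℝ) (c : Fin k → Fin k → ℝ) : ℝ :=
  sSup {v | ∃ p, Feasible c p ∧ v = obj r p}

lemma feasible_zero {k : ℕ} (c : Fin k → Fin k → ℝ) (hc : ∀ i j, 0 ≤ c i j) :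
    Feasible c (fun _ => 0) :=
  ⟨fun _ => le_refl _, by simp, fun i j => by simpa using hc i j⟩

lemma obj_le_one {k : ℕ} (r q : Fin k → ℝ) (hr : ∀ i, 0 ≤ r i ∧ r i ≤ 1)
    (hq0 : ∀ i, 0 ≤ q i) (hqs : ∑ i, q i ≤ 1) : obj r q ≤ 1 := by
  have : obj r q ≤ ∑ i, q i := by
    refine Finset.sum_le_sum fun i _ => ?_
    have := (hr i).1; have := (hr i).2; have := hq0 i; nlinarith
  linarith

/-- Telescoping perturbation bound: OPT(r,d) − OPT(r,d') ≤ ε k³. -/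
theorem stmt_8 {k : ℕ} (d d' : Fin k → Fin k → ℝ) (r : Fin k → ℝ) (ε : ℝ)
    (hd : ∀ i j, 0 ≤ d i j) (hd' : ∀ i j, 0 ≤ d' i j)
    (hclose : ∀ i j, |d i j - d' i j| ≤ ε) (hle : ∀ i j, d' i j ≤ d i j)
    (hr : ∀ i, 0 ≤ r i ∧ r i ≤ 1) :
    OPT r d - OPT r d' ≤ ε * k ^ 3 := by
  rcases Nat.eq_zero_or_pos k with hk0 | hk
  · subst hk0
    have hset : ∀ c : Fin 0 → Fin 0 → ℝ,
        {v | ∃ p, Feasible c p ∧ v = obj r p} = {0} := by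
      intro c
      ext v
      constructor
      · rintro ⟨p, -, rfl⟩; simp [obj]
      · rintro rfl
        exact ⟨fun _ => 0, feasible_zero c (fun i => i.elim0), by simp [obj]⟩
    have h1 : OPT r d = 0 := by rw [OPT, hset d]; exact csSup_singleton 0
    have h2 : OPT r d' = 0 := by rw [OPT, hset d']; exact csSup_singleton 0
    rw [h1, h2]; simp
  · have hε : 0 ≤ ε := le_trans (abs_nonneg _) (hclose ⟨0, hk⟩ ⟨0, hk⟩)
    set w : Fin k → Fin k → ℝ := fun i j => min (d' i j) (d' j i) with hw
    have hw0 : ∀ a b, 0 ≤ w a b := fun a b => le_min (hd' a b) (hd' b a)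
    -- the two feasible-value sets
    set S : Set ℝ := {v | ∃ p, Feasible d p ∧ v = obj r p} with hS
    set S' : Set ℝ := {v | ∃ p, Feasible d' p ∧ v = obj r p} with hS'
    have hSne : S.Nonempty := ⟨obj r (fun _ => 0), ⟨_, feasible_zero d hd, rfl⟩⟩
    have hS'ne : S'.Nonempty := ⟨obj r (fun _ => 0), ⟨_, feasible_zero d' hd', rfl⟩⟩
    have hS'bdd : BddAbove S' := by
      refine ⟨1, ?_⟩
      rintro v ⟨q, ⟨hq0, hqs, -⟩, rfl⟩
      exact obj_le_one r q hr hq0 hqs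
    have hmain : ∀ v ∈ S, v ≤ sSup S' + ε * k ^ 3 := by
      rintro v ⟨p, hp, rfl⟩
      obtain ⟨hp0, hps, hpc⟩ := hp
      -- step hypothesis for weights
      have hstep : ∀ a b, p b - p a - ε ≤ w a b := by
        intro a b
        have h1 := hpc a b
        have h2 := hpc b a
        have h3 := (abs_le.mp (hclose a b)).2
        have h4 := (abs_le.mp (hclose b a)).2
        have h5 : p b - p a ≤ |p a - p b| := by
          rw [abs_sub_comm]; exact le_abs_self _
        have h6 : p b - p a ≤ |p b - p a| := le_abs_self _
        refine le_min ?_ ?_ <;> [skip; skip]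
        · have := abs_le.mp (hclose a b); linarith
        · have := abs_le.mp (hclose b a); linarith
      obtain ⟨p', hp'0, hp'le, hp'lb, hp'c⟩ :=
        Stmt8BF.key w p hk ε hw0 hstep hε hp0
      -- p' is feasible for d'
      have hfeas : Feasible d' p' := by
        refine ⟨hp'0, ?_, ?_⟩
        · calc ∑ i, p' i ≤ ∑ i, p i := Finset.sum_le_sum fun i _ => hp'le i
            _ ≤ 1 := hps
        · intro i j
          rw [abs_sub_le_iff]
          constructor
          · have := hp'c i j
            have : w j i ≤ d' i j := min_le_right _ _
            have := hp'c i j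
            simp only [hw] at *
            have hm : min (d' j i) (d' i j) ≤ d' i j := min_le_right _ _
            linarith
          · have := hp'c j i
            simp only [hw] at *
            have hm : min (d' i j) (d' j i) ≤ d' i j := min_le_left _ _
            linarith
      -- objective loss bound
      have hobj : obj r p ≤ obj r p' + k * (k * ε) := by
        have : obj r p - obj r p' ≤ ∑ _i : Fin k, k * ε := by
          rw [obj, obj, ← Finset.sum_sub_distrib]
          refine Finset.sum_le_sum fun i _ => ?_
          have h1 := hp'lb i
          have h2 := hp'le i
          have h3 := (hr i).1
          have h4 := (hr i).2
          have h5 : r i * p i - r i * p' i = r i * (p i - p' i) := by ring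
          nlinarith
        simp only [Finset.sum_const, Finset.card_univ, Fintype.card_fin,
          nsmul_eq_mul] at this
        linarith
      have hmem : obj r p' ∈ S' := ⟨p', hfeas, rfl⟩
      have hle' : obj r p' ≤ sSup S' := le_csSup hS'bdd hmem
      have hkk : (k : ℝ) * (k * ε) ≤ ε * k ^ 3 := by
        have h1 : (1 : ℝ) ≤ k := by exact_mod_cast hk
        have k0 : (0 : ℝ) ≤ k := by positivity
        have h2 : 0 ≤ ε * ((k : ℝ) * k) * ((k : ℝ) - 1) :=
          mul_nonneg (mul_nonneg hε (mul_nonneg k0 k0)) (by linarith)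
        nlinarith [h2]
      linarith
    have := csSup_le hSne hmain
    have hOPT : OPT r d = sSup S := rfl
    have hOPT' : OPT r d' = sSup S' := rfl
    rw [hOPT, hOPT']
    linarith
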